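/- arXiv:2009.00991 — 2 statements merged into one kernel-verified Lean document; each statement's English description precedes it below -/
import Mathlib

section
/- Assume a is positive semidefinite on V (a(w,w) ≥ 0 for all w ∈ V) and the CFL condition holds with constant ρ ∈ [0,1), i.e. τ² a(w,w) ≤ 4ρ² ‖π w‖² for all w ∈ V. Then for any sequence (v^n) with v^n, v^{n+1} ∈ V, the discrete energy satisfies the lower bound E^{n+1/2}(v) ≥ ((1−ρ²)/2) ‖π((v^{n+1} − v^n)/τ)‖² + (1/2) a((v^{n+1} + v^n)/2, (v^{n+1} + v^n)/2) ≥ 0. -/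
open RealInnerProductSpace

/-- The discrete energy `E^{n+1/2}(v)` of the leapfrog scheme. -/
noncomputable def discE {H : Type*} [NormedAddCommGroup H] [InnerProductSpace ℝ H]
    (W : Submodule ℝ H) [W.HasOrthogonalProjection]
    (a : H →ₗ[ℝ] H →ₗ[ℝ] ℝ) (τ : ℝ) (v : ℕ → H) (n : ℕ) : ℝ :=
  (1 / 2) * ‖(W.orthogonalProjectionOnto (τ⁻¹ • (v (n + 1) - v n)) : H)‖ ^ 2
    - (τ ^ 2 / 8) * a (τ⁻¹ • (v (n + 1) - v n)) (τ⁻¹ • (v (n + 1) - v n))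
    + (1 / 2) * a ((2 : ℝ)⁻¹ • (v (n + 1) + v n)) ((2 : ℝ)⁻¹ • (v (n + 1) + v n))

/-- Under positive semidefiniteness of `a` on `V` and the CFL condition
`τ² a(w,w) ≤ 4ρ² ‖π w‖²` with `ρ ∈ [0,1)`, the discrete energy satisfies the lower bound
`E^{n+1/2}(v) ≥ ((1−ρ²)/2)‖π((v^{n+1}−v^n)/τ)‖² + (1/2) a((v^{n+1}+v^n)/2,(v^{n+1}+v^n)/2) ≥ 0`. -/
theorem energy_lower_bound
    {H : Type*} [NormedAddCommGroup H] [InnerProductSpace ℝ H]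
    (W V : Submodule ℝ H) [W.HasOrthogonalProjection]
    (a : H →ₗ[ℝ] H →ₗ[ℝ] ℝ) (hsymm : ∀ u w : H, a u w = a w u)
    (τ : ℝ) (hτ : 0 < τ)
    (ρ : ℝ) (hρ0 : 0 ≤ ρ) (hρ1 : ρ < 1)
    (hpos : ∀ w ∈ V, 0 ≤ a w w)
    (hCFL : ∀ w ∈ V, τ ^ 2 * a w w ≤ 4 * ρ ^ 2 * ‖(W.orthogonalProjectionOnto w : H)‖ ^ 2)
    (v : ℕ → H) (n : ℕ) (hvn : v n ∈ V) (hvn1 : v (n + 1) ∈ V) :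
    ((1 - ρ ^ 2) / 2) * ‖(W.orthogonalProjectionOnto (τ⁻¹ • (v (n + 1) - v n)) : H)‖ ^ 2
        + (1 / 2) * a ((2 : ℝ)⁻¹ • (v (n + 1) + v n)) ((2 : ℝ)⁻¹ • (v (n + 1) + v n))
      ≤ discE W a τ v n
    ∧ 0 ≤ ((1 - ρ ^ 2) / 2) * ‖(W.orthogonalProjectionOnto (τ⁻¹ • (v (n + 1) - v n)) : H)‖ ^ 2
        + (1 / 2) * a ((2 : ℝ)⁻¹ • (v (n + 1) + v n)) ((2 : ℝ)⁻¹ • (v (n + 1) + v n)) := by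

  set w : H := τ⁻¹ • (v (n + 1) - v n) with hw
  set u : H := (2 : ℝ)⁻¹ • (v (n + 1) + v n) with hu
  have hwV : w ∈ V := V.smul_mem _ (V.sub_mem hvn1 hvn)
  have huV : u ∈ V := V.smul_mem _ (V.add_mem hvn1 hvn)
  have h1 := hCFL w hwV
  have h2 := hpos u huV
  have h3 : (0:ℝ) ≤ ‖(W.orthogonalProjectionOnto w : H)‖ ^ 2 := by positivity
  constructor
  · unfold discE
    rw [← hw, ← hu]
    nlinarith
  · have h4 : (0:ℝ) ≤ (1 - ρ ^ 2) / 2 := by nlinarith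
    have := mul_nonneg h4 h3
    linarith
end

section
/- Assume a is positive semidefinite on V and the CFL condition holds with constant ρ ∈ [0,1) (τ² a(w,w) ≤ 4ρ² ‖π w‖² for all w ∈ V). Suppose (v^n)_{n≥0} is a sequence in V satisfying, for every n ≥ 1 and every w ∈ V, b((v^{n+1} − 2v^n + v^{n−1})/τ², w) + a(v^n, w) = b(f^n, w), where (f^n)_{n≥1} is a sequence in 𝓗. Then there exists a constant C > 0, depending only on ρ, such that for all n ≥ 1: ‖π((v^{n+1} − v^n)/τ)‖² + a((v^{n+1} + v^n)/2, (v^{n+1} + v^n)/2) ≤ C ( E^{1/2}(v) + τ² (Σ_{k=1}^{n} ‖π f^k‖)² ). -/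
open RealInnerProductSpace


/-- Algebraic leapfrog energy identity for symmetric bilinear forms. -/
lemma energy_step_identity {H : Type*} [AddCommGroup H] [Module ℝ H]
    (a q : H →ₗ[ℝ] H →ₗ[ℝ] ℝ) (ha : ∀ u w : H, a u w = a w u) (hq : ∀ u w : H, q u w = q w u)
    (τ : ℝ) (hτ : τ ≠ 0) (x y z : H) :
    (1/2) * q (τ⁻¹ • (z - y)) (τ⁻¹ • (z - y)) - τ^2/8 * a (τ⁻¹ • (z - y)) (τ⁻¹ • (z - y))
      + (1/2) * a ((2:ℝ)⁻¹ • (z + y)) ((2:ℝ)⁻¹ • (z + y))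
    = (1/2) * q (τ⁻¹ • (y - x)) (τ⁻¹ • (y - x)) - τ^2/8 * a (τ⁻¹ • (y - x)) (τ⁻¹ • (y - x))
      + (1/2) * a ((2:ℝ)⁻¹ • (y + x)) ((2:ℝ)⁻¹ • (y + x))
      + (q ((τ^2)⁻¹ • (z - (y + y) + x)) ((2:ℝ)⁻¹ • (z - x)) + a y ((2:ℝ)⁻¹ • (z - x))) := by
  simp only [map_sub, map_add, map_smul, LinearMap.sub_apply, LinearMap.add_apply,
    LinearMap.smul_apply, smul_eq_mul]
  simp only [ha y x, ha z x, ha z y, hq y x, hq z x, hq z y]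
  field_simp
  ring

/-- The projected inner product as a bilinear form. -/
noncomputable def qForm {H : Type*} [NormedAddCommGroup H] [InnerProductSpace ℝ H]
    (W : Submodule ℝ H) [W.HasOrthogonalProjection] : H →ₗ[ℝ] H →ₗ[ℝ] ℝ :=
  LinearMap.mk₂ ℝ
    (fun x y => ⟪(W.orthogonalProjectionOnto x : H), (W.orthogonalProjectionOnto y : H)⟫)
    (by intro x y z; simp [map_add, inner_add_left])
    (by intro c x y; simp [map_smul, real_inner_smul_left])
    (by intro x y z; simp [map_add, inner_add_right])
    (by intro c x y; simp [map_smul, real_inner_smul_right])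

lemma qForm_apply {H : Type*} [NormedAddCommGroup H] [InnerProductSpace ℝ H]
    (W : Submodule ℝ H) [W.HasOrthogonalProjection] (x y : H) :
    qForm W x y = ⟪(W.orthogonalProjectionOnto x : H), (W.orthogonalProjectionOnto y : H)⟫ := rfl

lemma qForm_symm {H : Type*} [NormedAddCommGroup H] [InnerProductSpace ℝ H]
    (W : Submodule ℝ H) [W.HasOrthogonalProjection] (x y : H) :
    qForm W x y = qForm W y x := real_inner_comm _ _

lemma qForm_self {H : Type*} [NormedAddCommGroup H] [InnerProductSpace ℝ H]
    (W : Submodule ℝ H) [W.HasOrthogonalProjection] (x : H) :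
    qForm W x x = ‖(W.orthogonalProjectionOnto x : H)‖ ^ 2 := real_inner_self_eq_norm_sq _

set_option maxHeartbeats 1000000

/-- Stability of the coarse-grid scheme driven by `b(f^n, ·)`: there is a constant `C > 0`
depending only on `ρ` such that
`‖π((v^{n+1}−v^n)/τ)‖² + a((v^{n+1}+v^n)/2,(v^{n+1}+v^n)/2)
  ≤ C (E^{1/2}(v) + τ² (Σ_{k=1}^n ‖π f^k‖)²)`. -/
theorem stability_estimate (ρ : ℝ) (hρ0 : 0 ≤ ρ) (hρ1 : ρ < 1) :
    ∃ C : ℝ, 0 < C ∧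
      ∀ (H : Type) [NormedAddCommGroup H] [InnerProductSpace ℝ H]
        (W V : Submodule ℝ H) [W.HasOrthogonalProjection]
        (a : H →ₗ[ℝ] H →ₗ[ℝ] ℝ), (∀ u w : H, a u w = a w u) →
      ∀ τ : ℝ, 0 < τ →
      (∀ w ∈ V, 0 ≤ a w w) →
      (∀ w ∈ V, τ ^ 2 * a w w ≤ 4 * ρ ^ 2 * ‖(W.orthogonalProjectionOnto w : H)‖ ^ 2) →
      ∀ (v : ℕ → H) (f : ℕ → H), (∀ n, v n ∈ V) →
      (∀ n, 1 ≤ n → ∀ w ∈ V,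
        ⟪(W.orthogonalProjectionOnto ((τ ^ 2)⁻¹ • (v (n + 1) - 2 • v n + v (n - 1))) : H),
          (W.orthogonalProjectionOnto w : H)⟫ + a (v n) w
        = ⟪(W.orthogonalProjectionOnto (f n) : H), (W.orthogonalProjectionOnto w : H)⟫) →
      ∀ n, 1 ≤ n →
        ‖(W.orthogonalProjectionOnto (τ⁻¹ • (v (n + 1) - v n)) : H)‖ ^ 2
          + a ((2 : ℝ)⁻¹ • (v (n + 1) + v n)) ((2 : ℝ)⁻¹ • (v (n + 1) + v n))
        ≤ C * (discE W a τ v 0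
            + τ ^ 2 * (∑ k ∈ Finset.Icc 1 n, ‖(W.orthogonalProjectionOnto (f k) : H)‖) ^ 2) := by
  have h1ρ : 0 < 1 - ρ ^ 2 := by nlinarith
  set c : ℝ := 2 / (1 - ρ ^ 2) with hcdef
  have hc0 : 0 < c := by positivity
  have hcinv : c * ((1 - ρ ^ 2) / 2) = 1 := by rw [hcdef]; field_simp
  clear_value c
  refine ⟨4 * c + 2 * c ^ 2 + 3, by positivity, ?_⟩
  intro H _ _ W V _ a hsym τ hτ hpos hCFL v f hv hscheme n hn
  set q : H →ₗ[ℝ] H →ₗ[ℝ] ℝ := qForm W with hqdef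
  set D : ℕ → H := fun k => τ⁻¹ • (v (k + 1) - v k) with hD
  set m : ℕ → H := fun k => (2 : ℝ)⁻¹ • (v (k + 1) + v k) with hm
  set En : ℕ → ℝ := fun k => discE W a τ v k with hEdef
  set nD : ℕ → ℝ := fun k => ‖(W.orthogonalProjectionOnto (D k) : H)‖ with hnD
  have hEn : ∀ k, En k = (1/2) * q (D k) (D k) - τ^2/8 * a (D k) (D k)
      + (1/2) * a (m k) (m k) := by
    intro k
    simp only [hEdef, discE, hqdef, qForm_self, hD, hm]
    try ring
  have hE0eq : En 0 = discE W a τ v 0 := by rw [hEdef]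
  have hgoalEq : ‖(W.orthogonalProjectionOnto (τ⁻¹ • (v (n + 1) - v n)) : H)‖ ^ 2
      + a ((2 : ℝ)⁻¹ • (v (n + 1) + v n)) ((2 : ℝ)⁻¹ • (v (n + 1) + v n))
      = nD n ^ 2 + a (m n) (m n) := by simp only [hnD, hD, hm]
  have hDV : ∀ k, D k ∈ V := by
    intro k; rw [hD]; exact V.smul_mem _ (V.sub_mem (hv _) (hv _))
  have hmV : ∀ k, m k ∈ V := by
    intro k; rw [hm]; exact V.smul_mem _ (V.add_mem (hv _) (hv _))
  -- coercivity
  have hcoer : ∀ k, (1 - ρ ^ 2)/2 * nD k ^ 2 + (1/2) * a (m k) (m k) ≤ En k := by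
    intro k
    have h1 := hCFL (D k) (hDV k)
    have h2 : q (D k) (D k) = nD k ^ 2 := by rw [hnD, hqdef]; exact qForm_self W (D k)
    rw [hEn k, h2]
    have h3 : ‖(W.orthogonalProjectionOnto (D k) : H)‖ ^ 2 = nD k ^ 2 := by rw [hnD]
    rw [h3] at h1
    nlinarith [h1]
  have hEnpos : ∀ k, 0 ≤ En k := by
    intro k
    have := hcoer k
    have h2 := hpos (m k) (hmV k)
    nlinarith [sq_nonneg (nD k)]
  -- energy identity per step
  have hstep : ∀ k, En (k + 1) = En k
      + ⟪(W.orthogonalProjectionOnto (f (k + 1)) : H),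
         (W.orthogonalProjectionOnto ((2 : ℝ)⁻¹ • (v (k + 1 + 1) - v k)) : H)⟫ := by
    intro k
    have hw : (2 : ℝ)⁻¹ • (v (k + 1 + 1) - v k) ∈ V :=
      V.smul_mem _ (V.sub_mem (hv _) (hv _))
    have hsch := hscheme (k + 1) (by omega) ((2 : ℝ)⁻¹ • (v (k + 1 + 1) - v k)) hw
    have h2 : v (k + 1 + 1) - 2 • v (k + 1) + v (k + 1 - 1)
        = v (k + 1 + 1) - (v (k + 1) + v (k + 1)) + v k := by
      rw [two_smul]
      norm_num
    rw [h2] at hsch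
    have hid := energy_step_identity a q hsym
      (fun u w => by rw [hqdef]; exact qForm_symm W u w) τ (ne_of_gt hτ)
      (v k) (v (k + 1)) (v (k + 1 + 1))
    have hq1 : q ((τ ^ 2)⁻¹ • (v (k + 1 + 1) - (v (k + 1) + v (k + 1)) + v k))
        ((2 : ℝ)⁻¹ • (v (k + 1 + 1) - v k))
        = ⟪(W.orthogonalProjectionOnto
              ((τ ^ 2)⁻¹ • (v (k + 1 + 1) - (v (k + 1) + v (k + 1)) + v k)) : H),
           (W.orthogonalProjectionOnto ((2 : ℝ)⁻¹ • (v (k + 1 + 1) - v k)) : H)⟫ := by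
      rw [hqdef]; rfl
    rw [hEn (k + 1), hEn k]
    simp only [hD, hm]
    rw [hq1] at hid
    linarith [hid, hsch]
  -- bound on the increment vector
  have hwb : ∀ k, ‖(W.orthogonalProjectionOnto ((2 : ℝ)⁻¹ • (v (k + 1 + 1) - v k)) : H)‖
      ≤ τ / 2 * (nD (k + 1) + nD k) := by
    intro k
    have hvec : (2 : ℝ)⁻¹ • (v (k + 1 + 1) - v k) = (τ / 2) • (D (k + 1) + D k) := by
      simp only [hD]
      match_scalars <;> field_simp <;> ring
    calc ‖(W.orthogonalProjectionOnto ((2 : ℝ)⁻¹ • (v (k + 1 + 1) - v k)) : H)‖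
        = ‖(τ / 2) • ((W.orthogonalProjectionOnto (D (k + 1) + D k) : H))‖ := by
          rw [hvec, map_smul, Submodule.coe_smul]
      _ = τ / 2 * ‖(W.orthogonalProjectionOnto (D (k + 1) + D k) : H)‖ := by
          rw [norm_smul, Real.norm_eq_abs, abs_of_pos (by positivity)]
      _ ≤ τ / 2 * (nD (k + 1) + nD k) := by
          have hle : ‖(W.orthogonalProjectionOnto (D (k + 1) + D k) : H)‖
              ≤ nD (k + 1) + nD k := by
            rw [hnD, map_add, Submodule.coe_add]
            exact norm_add_le _ _
          have h2 : (0:ℝ) ≤ τ / 2 := by positivity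
          exact mul_le_mul_of_nonneg_left hle h2
  clear_value q D m En nD
  -- the max of the projected velocities
  have hne : (Finset.range (n + 1)).Nonempty := ⟨0, by simp⟩
  obtain ⟨k₀, hk₀mem, hk₀eq⟩ := Finset.exists_mem_eq_sup' hne nD
  set M : ℝ := (Finset.range (n + 1)).sup' hne nD with hMdef
  have hM : ∀ k, k ≤ n → nD k ≤ M := fun k hk =>
    Finset.le_sup' nD (Finset.mem_range.mpr (by omega))
  have hMk₀ : M = nD k₀ := hk₀eq
  have hk₀n : k₀ ≤ n := by have := Finset.mem_range.mp hk₀mem; omega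
  have hM0 : 0 ≤ M := by
    refine le_trans ?_ (hM 0 (by omega))
    rw [hnD]; exact norm_nonneg _
  clear_value M
  set S : ℝ := ∑ k ∈ Finset.Icc 1 n, ‖(W.orthogonalProjectionOnto (f k) : H)‖ with hSdef
  have hS0 : 0 ≤ S := by
    rw [hSdef]; exact Finset.sum_nonneg fun _ _ => norm_nonneg _
  -- per-step energy bound
  have hstepb : ∀ k, k + 1 ≤ n → En (k + 1) ≤ En k
      + τ * ‖(W.orthogonalProjectionOnto (f (k + 1)) : H)‖ * M := by
    intro k hk
    rw [hstep k]
    have hcs := real_inner_le_norm ((W.orthogonalProjectionOnto (f (k + 1)) : H))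
      ((W.orthogonalProjectionOnto ((2 : ℝ)⁻¹ • (v (k + 1 + 1) - v k)) : H))
    have hb := hwb k
    have h1 : nD (k + 1) ≤ M := hM _ (by omega)
    have h2 : nD k ≤ M := hM _ (by omega)
    have hf0 : (0:ℝ) ≤ ‖(W.orthogonalProjectionOnto (f (k + 1)) : H)‖ := norm_nonneg _
    have h3 := mul_le_mul_of_nonneg_left hb hf0
    have h4 := mul_le_mul_of_nonneg_left (show nD (k + 1) + nD k ≤ 2 * M by linarith)
      (mul_nonneg hf0 (by positivity : (0:ℝ) ≤ τ / 2))
    nlinarith [hcs, h3, h4]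
  -- telescoped bound
  have htel : ∀ k, k ≤ n → En k ≤ En 0
      + τ * M * ∑ j ∈ Finset.Icc 1 k, ‖(W.orthogonalProjectionOnto (f j) : H)‖ := by
    intro k
    induction k with
    | zero => intro _; simp
    | succ k ih =>
      intro hk
      have h1 := hstepb k hk
      have h2 := ih (by omega)
      rw [Finset.sum_Icc_succ_top (by omega : 1 ≤ k + 1)]
      nlinarith [h1, h2]
  have hEnb : ∀ k, k ≤ n → En k ≤ En 0 + τ * M * S := by
    intro k hk
    refine le_trans (htel k hk) ?_
    have hsub : Finset.Icc 1 k ⊆ Finset.Icc 1 n := Finset.Icc_subset_Icc le_rfl hk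
    have hsum := Finset.sum_le_sum_of_subset_of_nonneg hsub
      (fun i _ _ => norm_nonneg ((W.orthogonalProjectionOnto (f i) : H)))
    have h3 : τ * M * (∑ j ∈ Finset.Icc 1 k, ‖(W.orthogonalProjectionOnto (f j) : H)‖)
        ≤ τ * M * S := by
      rw [hSdef]
      exact mul_le_mul_of_nonneg_left hsum (mul_nonneg hτ.le hM0)
    linarith
  clear_value S
  -- the max bound
  have hMsq : M ^ 2 ≤ 2 * c * En 0 + c ^ 2 * τ ^ 2 * S ^ 2 := by
    have h1 : (1 - ρ ^ 2)/2 * M ^ 2 ≤ En k₀ := by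
      rw [hMk₀]
      have := hcoer k₀
      have := hpos (m k₀) (hmV k₀)
      nlinarith
    have h2 := hEnb k₀ hk₀n
    have h3 : (1 - ρ ^ 2)/2 * M ^ 2 ≤ En 0 + τ * M * S := h1.trans h2
    have h4 := mul_le_mul_of_nonneg_left h3 hc0.le
    have hM2 : M ^ 2 ≤ c * En 0 + c * (τ * M * S) := by
      calc M ^ 2 = c * ((1 - ρ ^ 2)/2) * M ^ 2 := by rw [hcinv]; ring
        _ = c * ((1 - ρ ^ 2)/2 * M ^ 2) := by ring
        _ ≤ c * (En 0 + τ * M * S) := h4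
        _ = c * En 0 + c * (τ * M * S) := by ring
    linarith [hM2, sq_nonneg (M - c * τ * S)]
  -- conclude
  rw [hgoalEq, ← hE0eq]
  have hgoal1 : nD n ≤ M := hM n le_rfl
  have hnD0 : 0 ≤ nD n := by rw [hnD]; exact norm_nonneg _
  have hnDsq : nD n ^ 2 ≤ M ^ 2 := by
    have := pow_le_pow_left₀ hnD0 hgoal1 2
    simpa using this
  have hEnn := hEnb n le_rfl
  have hco := hcoer n
  have hE00 := hEnpos 0
  have hEnn0 := hEnpos n
  have hamn : a (m n) (m n) ≤ 2 * En n := by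
    have hpn : (0:ℝ) ≤ (1 - ρ ^ 2)/2 * nD n ^ 2 := by positivity
    linarith [hco]
  linarith [sq_nonneg (M - τ * S), hMsq, hnDsq, hamn, hEnn,
    mul_nonneg hE00 hc0.le, mul_nonneg (mul_nonneg hc0.le hc0.le) hE00,
    mul_nonneg hc0.le (mul_nonneg (sq_nonneg τ) (sq_nonneg S)),
    mul_nonneg (mul_nonneg hc0.le hc0.le) (mul_nonneg (sq_nonneg τ) (sq_nonneg S)),
    mul_nonneg (sq_nonneg τ) (sq_nonneg S)]
end
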